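/- arXiv:1412.7653 — 2 statements merged into one kernel-verified Lean document; each statement's English description precedes it below -/
import Mathlib

section
/- For natural numbers D, N, j, t with j + t ≤ D ≤ N and N > 0, the real number C(D,j)·C(D−j,t)/C(N,j+t) is at most (D/N)^(j+t) · C(j+t, j). -/
lemma choose_pow_le (k D N : ℕ) (h : D ≤ N) :
    D.choose k * N ^ k ≤ N.choose k * D ^ k := by
  induction k with
  | zero => simp
  | succ k ih =>
    apply Nat.le_of_mul_le_mul_right _ (Nat.succ_pos k)
    calc D.choose (k+1) * N ^ (k+1) * (k+1)
        = (D.choose (k+1) * (k+1)) * N ^ (k+1) := by ring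
      _ = D.choose k * (D - k) * N ^ (k+1) := by rw [Nat.choose_succ_right_eq]
      _ = (D.choose k * N ^ k) * ((D - k) * N) := by ring
      _ ≤ (N.choose k * D ^ k) * ((N - k) * D) := by
          apply Nat.mul_le_mul ih
          rw [Nat.sub_mul, Nat.sub_mul]
          rw [Nat.mul_comm N D]
          exact Nat.sub_le_sub_left (Nat.mul_le_mul_left k h) _
      _ = (N.choose k * (N - k)) * D ^ (k+1) := by ring
      _ = N.choose (k+1) * D ^ (k+1) * (k+1) := by rw [← Nat.choose_succ_right_eq]; ring

theorem choose_prod_ratio_le (D N j t : ℕ) (h1 : j + t ≤ D) (h2 : D ≤ N) (hN : 0 < N) :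
    (D.choose j : ℝ) * ((D - j).choose t : ℝ) / (N.choose (j + t) : ℝ)
      ≤ ((D : ℝ) / N) ^ (j + t) * ((j + t).choose j : ℝ) := by
  have hid : D.choose j * (D - j).choose t = D.choose (j + t) * (j + t).choose j := by
    rw [Nat.choose_mul (n := D) (Nat.le_add_right j t), Nat.add_sub_cancel_left]
  have hNk : 0 < N.choose (j + t) := Nat.choose_pos (h1.trans h2)
  have hNk' : (0:ℝ) < (N.choose (j + t) : ℝ) := by exact_mod_cast hNk
  have hNpos : (0:ℝ) < (N : ℝ) := by exact_mod_cast hN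
  rw [div_le_iff₀ hNk']
  have key := choose_pow_le (j + t) D N h2
  have key' : (D.choose (j + t) : ℝ) * N ^ (j + t) ≤ N.choose (j + t) * D ^ (j + t) := by
    exact_mod_cast key
  have hidR : (D.choose j : ℝ) * ((D - j).choose t : ℝ)
      = (D.choose (j + t) : ℝ) * ((j + t).choose j : ℝ) := by exact_mod_cast hid
  have hmain : (D.choose (j+t) : ℝ) ≤ ((D:ℝ)/N)^(j+t) * (N.choose (j+t) : ℝ) := by
    rw [div_pow, div_mul_eq_mul_div, le_div_iff₀ (by positivity)]
    nlinarith [key']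
  rw [hidR]
  calc (D.choose (j+t) : ℝ) * ((j+t).choose j : ℝ)
      = ((j+t).choose j : ℝ) * (D.choose (j+t) : ℝ) := by ring
    _ ≤ ((j+t).choose j : ℝ) * (((D:ℝ)/N)^(j+t) * (N.choose (j+t) : ℝ)) :=
        mul_le_mul_of_nonneg_left hmain (by positivity)
    _ = ((D:ℝ)/N)^(j+t) * ((j+t).choose j : ℝ) * (N.choose (j+t) : ℝ) := by ring
end

section
/- For a real number a with 0 < a < 1/2 and a natural number i, it holds that ∑_{r=1}^{2i+1} a^r · (∑_{s : s < r−s ∧ s ≤ r} C(r,s)) ≤ (a/(1−2a)) · (1 − (2a)^(2i+1)). -/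
lemma inner_sum_le (r : ℕ) (hr : 1 ≤ r) :
    ∑ s ∈ (Finset.range (r + 1)).filter (fun s => s < r - s), r.choose s ≤ 2 ^ (r - 1) := by
  set L := ∑ s ∈ (Finset.range (r + 1)).filter (fun s => s < r - s), r.choose s with hL
  have hsymm : L = ∑ s ∈ (Finset.range (r + 1)).filter (fun s => r - s < s), r.choose s := by
    rw [hL]
    apply Finset.sum_nbij' (fun s => r - s) (fun s => r - s)
    · intro s hs
      simp only [Finset.mem_filter, Finset.mem_range] at hs ⊢
      omega
    · intro s hs
      simp only [Finset.mem_filter, Finset.mem_range] at hs ⊢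
      omega
    · intro s hs
      simp only [Finset.mem_filter, Finset.mem_range] at hs
      omega
    · intro s hs
      simp only [Finset.mem_filter, Finset.mem_range] at hs
      omega
    · intro s hs
      simp only [Finset.mem_filter, Finset.mem_range] at hs
      rw [Nat.choose_symm (by omega)]
  have htotal : ∑ s ∈ Finset.range (r + 1), r.choose s = 2 ^ r := Nat.sum_range_choose r
  have hsplit : L + ∑ s ∈ (Finset.range (r + 1)).filter (fun s => ¬ s < r - s), r.choose s
      = 2 ^ r := by
    rw [hL, Finset.sum_filter_add_sum_filter_not, htotal]
  have hsub : ∑ s ∈ (Finset.range (r + 1)).filter (fun s => r - s < s), r.choose s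
      ≤ ∑ s ∈ (Finset.range (r + 1)).filter (fun s => ¬ s < r - s), r.choose s := by
    apply Finset.sum_le_sum_of_subset
    intro s hs
    simp only [Finset.mem_filter, Finset.mem_range] at hs ⊢
    omega
  have h2 : 2 * L ≤ 2 ^ r := by
    calc 2 * L = L + L := by ring
    _ ≤ L + ∑ s ∈ (Finset.range (r + 1)).filter (fun s => ¬ s < r - s), r.choose s := by
        exact add_le_add le_rfl (le_trans (le_of_eq hsymm) hsub)
    _ = 2 ^ r := hsplit
  have : 2 ^ r = 2 * 2 ^ (r - 1) := by
    rw [← pow_succ']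
    congr 1
    omega
  omega

theorem sum_pow_mul_binom_le (a : ℝ) (ha0 : 0 < a) (ha : a < 1 / 2) (i : ℕ) :
    ∑ r ∈ Finset.Icc 1 (2 * i + 1),
        a ^ r * (∑ s ∈ (Finset.range (r + 1)).filter (fun s => s < r - s), (r.choose s : ℝ))
      ≤ a / (1 - 2 * a) * (1 - (2 * a) ^ (2 * i + 1)) := by
  have hx1 : (2 : ℝ) * a ≠ 1 := by linarith
  have hstep : ∀ r ∈ Finset.Icc 1 (2 * i + 1),
      a ^ r * (∑ s ∈ (Finset.range (r + 1)).filter (fun s => s < r - s), (r.choose s : ℝ))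
        ≤ (1 / 2) * (2 * a) ^ r := by
    intro r hr
    simp only [Finset.mem_Icc] at hr
    have h1 : (∑ s ∈ (Finset.range (r + 1)).filter (fun s => s < r - s), (r.choose s : ℝ))
        ≤ (2 : ℝ) ^ (r - 1) := by
      have := inner_sum_le r hr.1
      calc (∑ s ∈ (Finset.range (r + 1)).filter (fun s => s < r - s), (r.choose s : ℝ))
          = ((∑ s ∈ (Finset.range (r + 1)).filter (fun s => s < r - s), r.choose s : ℕ) : ℝ) := by
            push_cast; ring
        _ ≤ ((2 ^ (r - 1) : ℕ) : ℝ) := by exact_mod_cast this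
        _ = (2 : ℝ) ^ (r - 1) := by push_cast; ring
    have hpow : a ^ r * (2 : ℝ) ^ (r - 1) = (1 / 2) * (2 * a) ^ r := by
      rw [mul_pow]
      have : (2 : ℝ) ^ r = 2 * 2 ^ (r - 1) := by
        rw [← pow_succ']
        congr 1
        omega
      rw [this]
      ring
    calc a ^ r * (∑ s ∈ (Finset.range (r + 1)).filter (fun s => s < r - s), (r.choose s : ℝ))
        ≤ a ^ r * (2 : ℝ) ^ (r - 1) := by
          apply mul_le_mul_of_nonneg_left h1 (by positivity)
      _ = (1 / 2) * (2 * a) ^ r := hpow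
  calc ∑ r ∈ Finset.Icc 1 (2 * i + 1),
        a ^ r * (∑ s ∈ (Finset.range (r + 1)).filter (fun s => s < r - s), (r.choose s : ℝ))
      ≤ ∑ r ∈ Finset.Icc 1 (2 * i + 1), (1 / 2) * (2 * a) ^ r := Finset.sum_le_sum hstep
    _ = a / (1 - 2 * a) * (1 - (2 * a) ^ (2 * i + 1)) := by
        rw [← Finset.mul_sum]
        have hIcc : Finset.Icc 1 (2 * i + 1) = Finset.Ico 1 (2 * i + 2) := by
          ext x; simp only [Finset.mem_Icc, Finset.mem_Ico]; omega
        rw [hIcc, geom_sum_Ico' hx1 (by omega)]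
        have h1 : (1 : ℝ) - 2 * a ≠ 0 := by
          intro h; apply hx1; linarith
        field_simp
        ring
end
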